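/- If G is an r-regular graph of order n with r ≥ 2 even, then ((1-r)/(1+r))·n ≤ γ⁰_st(G) ≤ 0. -/

import Mathlib

open SimpleGraph Finset

/-- Double counting edges between two sets of vertices. -/
lemma istdn_doubleCount {V : Type*} [Fintype V] [DecidableEq V]
    (G : SimpleGraph V) [DecidableRel G.Adj] (A B : Finset V) :
    ∑ u ∈ A, (G.neighborFinset u ∩ B).card = ∑ v ∈ B, (G.neighborFinset v ∩ A).card := by
  have key : ∀ (s : Finset V) (u : V),
      (G.neighborFinset u ∩ s).card = ∑ v ∈ s, if G.Adj u v then 1 else 0 := by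
    intro s u
    rw [← Finset.sum_filter]
    simp only [Finset.sum_const, smul_eq_mul, mul_one]
    congr 1
    ext v
    simp [SimpleGraph.mem_neighborFinset, and_comm]
  simp only [key]
  rw [Finset.sum_comm]
  apply Finset.sum_congr rfl
  intro v _
  apply Finset.sum_congr rfl
  intro u _
  simp [G.adj_comm]

lemma istdn_inter_filter {V : Type*} [Fintype V] [DecidableEq V]
    (s : Finset V) (p : V → Prop) [DecidablePred p] :
    s ∩ Finset.univ.filter p = s.filter p := by
  ext v; simp

/-- If `G` is `r`-regular of order `n` with `r ≥ 2` even, then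
`((1-r)/(1+r))·n ≤ γ⁰_st(G) ≤ 0`. -/
theorem istdn_even_regular_bounds {V : Type*} [Fintype V] [DecidableEq V]
    (G : SimpleGraph V) [DecidableRel G.Adj] (r : ℕ) (hr2 : 2 ≤ r) (hr : Even r)
    (hreg : G.IsRegularOfDegree r)
    (g : ℤ)
    (hg : IsGreatest {w : ℤ | ∃ f : V → ℤ,
        (∀ v, f v = 1 ∨ f v = -1) ∧
        (∀ v : V, ∑ u ∈ G.neighborFinset v, f u ≤ 0) ∧
        w = ∑ v, f v} g) :
    ((1 - (r : ℚ)) / (1 + (r : ℚ))) * (Fintype.card V : ℚ) ≤ (g : ℚ) ∧ g ≤ 0 := by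
  obtain ⟨f, hf1, hf2, hgsum⟩ := hg.1
  obtain ⟨k, hk⟩ := hr
  -- cardinality of neighborhoods
  have hcard : ∀ u : V, (G.neighborFinset u).card = r := by
    intro u; rw [G.card_neighborFinset_eq_degree]; exact hreg u
  -- the positive and negative sets
  set P : Finset V := Finset.univ.filter (fun v => f v = 1) with hP
  set M : Finset V := Finset.univ.filter (fun v => f v = -1) with hM
  have hMP : ∀ v : V, ¬ (f v = 1) ↔ f v = -1 := by
    intro v; rcases hf1 v with h | h <;> simp [h]
  -- neighborhood sum formula
  have hns : ∀ u : V, ∑ w ∈ G.neighborFinset u, f w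
      = 2 * (((G.neighborFinset u).filter (fun w => f w = 1)).card : ℤ) - (r : ℤ) := by
    intro u
    have hsplit := Finset.sum_filter_add_sum_filter_not (G.neighborFinset u)
      (fun w => f w = 1) f
    have h1 : ∑ w ∈ (G.neighborFinset u).filter (fun w => f w = 1), f w
        = (((G.neighborFinset u).filter (fun w => f w = 1)).card : ℤ) := by
      rw [Finset.sum_congr rfl (fun w hw => (Finset.mem_filter.mp hw).2)]
      simp
    have h2 : ∑ w ∈ (G.neighborFinset u).filter (fun w => ¬ f w = 1), f w
        = -(((G.neighborFinset u).filter (fun w => ¬ f w = 1)).card : ℤ) := by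
      rw [Finset.sum_congr rfl (fun w hw => (hMP w).mp (Finset.mem_filter.mp hw).2)]
      simp
    have h3 : ((G.neighborFinset u).filter (fun w => f w = 1)).card
        + ((G.neighborFinset u).filter (fun w => ¬ f w = 1)).card = r := by
      rw [Finset.card_filter_add_card_filter_not, hcard]
    rw [← hsplit, h1, h2]
    have := congrArg (fun n : ℕ => (n : ℤ)) h3
    push_cast at this ⊢
    linarith
  -- partition of the vertex set
  have hPMcard : P.card + M.card = Fintype.card V := by
    have : M = Finset.univ.filter (fun v => ¬ f v = 1) := by
      apply Finset.filter_congr; intro v _; simp [hMP v]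
    rw [this, hP, Finset.card_filter_add_card_filter_not, Finset.card_univ]
  have hgPM : g = (P.card : ℤ) - (M.card : ℤ) := by
    rw [hgsum]
    have hsplit := Finset.sum_filter_add_sum_filter_not Finset.univ (fun v => f v = 1) f
    have h1 : ∑ v ∈ P, f v = (P.card : ℤ) := by
      rw [Finset.sum_congr rfl (fun w hw => (Finset.mem_filter.mp hw).2)]; simp [hP]
    have h2 : ∑ v ∈ Finset.univ.filter (fun v => ¬ f v = 1), f v
        = -(M.card : ℤ) := by
      have hM2 : Finset.univ.filter (fun v : V => ¬ f v = 1) = M := by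
        apply Finset.filter_congr; intro v _; simp [hMP v]
      rw [hM2, Finset.sum_congr rfl (fun w hw => (Finset.mem_filter.mp hw).2)]; simp [hM]
    rw [← hsplit, h1, h2]; ring
  -- Upper bound: g ≤ 0
  have hub : g ≤ 0 := by
    have hdouble : ∑ v : V, ∑ u ∈ G.neighborFinset v, f u = (r : ℤ) * ∑ v : V, f v := by
      have := istdn_doubleCount G Finset.univ Finset.univ  -- not used; direct computation below
      calc ∑ v : V, ∑ u ∈ G.neighborFinset v, f u
          = ∑ v : V, ∑ u : V, if G.Adj v u then f u else 0 := by
            apply Finset.sum_congr rfl; intro v _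
            rw [← Finset.sum_filter]
            apply Finset.sum_congr _ (fun _ _ => rfl)
            ext u; simp [SimpleGraph.mem_neighborFinset]
        _ = ∑ u : V, ∑ v : V, if G.Adj v u then f u else 0 := Finset.sum_comm
        _ = ∑ u : V, (r : ℤ) * f u := by
            apply Finset.sum_congr rfl; intro u _
            rw [← Finset.sum_filter]
            rw [Finset.sum_const]
            have : Finset.univ.filter (fun v => G.Adj v u) = G.neighborFinset u := by
              ext v; simp [SimpleGraph.mem_neighborFinset, G.adj_comm]
            rw [this, hcard]
            simp [mul_comm]
        _ = (r : ℤ) * ∑ v : V, f v := by rw [Finset.mul_sum]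
    have hle : ∑ v : V, ∑ u ∈ G.neighborFinset v, f u ≤ 0 :=
      Finset.sum_nonpos (fun v _ => hf2 v)
    rw [hdouble, ← hgsum] at hle
    have hrpos : (0 : ℤ) < (r : ℤ) := by exact_mod_cast lt_of_lt_of_le (by norm_num) hr2
    nlinarith
  refine ⟨?_, hub⟩
  -- Lower bound
  -- tight vertices
  set T : Finset V := Finset.univ.filter
    (fun u => ∑ w ∈ G.neighborFinset u, f w = 0) with hT
  -- every vertex of M has a neighbor in T (flip argument)
  have hflip : ∀ v ∈ M, ∃ u ∈ G.neighborFinset v,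
      ∑ w ∈ G.neighborFinset u, f w = 0 := by
    intro v hv
    have hfv : f v = -1 := (Finset.mem_filter.mp hv).2
    by_contra hcon
    push_neg at hcon
    -- then every neighbor sum of a neighbor of v is ≤ -2
    have hstrong : ∀ u, v ∈ G.neighborFinset u →
        ∑ w ∈ G.neighborFinset u, f w ≤ -2 := by
      intro u hu
      have huv : u ∈ G.neighborFinset v := by
        rw [SimpleGraph.mem_neighborFinset] at hu ⊢
        exact hu.symm
      have h1 := hcon u huv
      have h2 := hf2 u
      have h3 := hns u
      omega
    set f' : V → ℤ := Function.update f v 1 with hf'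
    have hup : ∀ u : V, ∑ w ∈ G.neighborFinset u, f' w ≤ 0 := by
      intro u
      by_cases hvu : v ∈ G.neighborFinset u
      · have hs : ∑ w ∈ G.neighborFinset u, f' w
            = (∑ w ∈ G.neighborFinset u, f w) + 2 := by
          rw [hf', Finset.sum_update_of_mem hvu,
            ← Finset.add_sum_erase _ f hvu, Finset.sdiff_singleton_eq_erase, hfv]
          ring
        have := hstrong u hvu
        omega
      · have hs : ∑ w ∈ G.neighborFinset u, f' w
            = ∑ w ∈ G.neighborFinset u, f w := by
          apply Finset.sum_congr rfl
          intro w hw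
          rw [hf', Function.update_of_ne]
          rintro rfl; exact hvu hw
        rw [hs]; exact hf2 u
    have hmem : (∑ w : V, f' w) ∈ {w : ℤ | ∃ f : V → ℤ,
        (∀ v, f v = 1 ∨ f v = -1) ∧
        (∀ v : V, ∑ u ∈ G.neighborFinset v, f u ≤ 0) ∧
        w = ∑ v, f v} := by
      refine ⟨f', ?_, hup, rfl⟩
      intro w
      by_cases hwv : w = v
      · subst hwv; left; simp [hf']
      · rw [hf', Function.update_of_ne hwv]; exact hf1 w
    have hgain : ∑ w : V, f' w = g + 2 := by
      rw [hf', Finset.sum_update_of_mem (Finset.mem_univ v),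
        Finset.sdiff_singleton_eq_erase, hgsum,
        ← Finset.add_sum_erase _ f (Finset.mem_univ v), hfv]
      ring
    have := hg.2 hmem
    omega
  -- tight vertices have exactly k neighbors in P and k in M
  have hTP : ∀ u ∈ T, (G.neighborFinset u ∩ P).card = k := by
    intro u hu
    have h0 : ∑ w ∈ G.neighborFinset u, f w = 0 := (Finset.mem_filter.mp hu).2
    have h3 := hns u
    rw [hP, istdn_inter_filter]
    omega
  have hTM : ∀ u ∈ T, (G.neighborFinset u ∩ M).card = k := by
    intro u hu
    have hp := hTP u hu
    have h3 : (G.neighborFinset u ∩ P).card + (G.neighborFinset u ∩ M).card = r := by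
      rw [hP, hM, istdn_inter_filter, istdn_inter_filter]
      have hM2 : (G.neighborFinset u).filter (fun v : V => f v = -1)
          = (G.neighborFinset u).filter (fun v : V => ¬ f v = 1) := by
        apply Finset.filter_congr; intro v _; simp [hMP v]
      rw [hM2, Finset.card_filter_add_card_filter_not, hcard]
    omega
  -- M.card ≤ k * T.card
  have e1 : M.card ≤ k * T.card := by
    have step1 : M.card ≤ ∑ v ∈ M, (G.neighborFinset v ∩ T).card := by
      calc M.card = ∑ v ∈ M, 1 := by rw [Finset.sum_const, smul_eq_mul, mul_one]
        _ ≤ ∑ v ∈ M, (G.neighborFinset v ∩ T).card := by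
            apply Finset.sum_le_sum
            intro v hv
            obtain ⟨u, hu, hu0⟩ := hflip v hv
            have : u ∈ G.neighborFinset v ∩ T := by
              rw [Finset.mem_inter, hT]
              exact ⟨hu, Finset.mem_filter.mpr ⟨Finset.mem_univ u, hu0⟩⟩
            exact Finset.card_pos.mpr ⟨u, this⟩
    have step2 : ∑ v ∈ M, (G.neighborFinset v ∩ T).card = k * T.card := by
      rw [istdn_doubleCount G M T]
      rw [Finset.sum_congr rfl hTM, Finset.sum_const, smul_eq_mul, mul_comm]
    omega
  -- k * T.card ≤ r * P.card
  have e2 : k * T.card ≤ r * P.card := by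
    have step1 : k * T.card = ∑ v ∈ P, (G.neighborFinset v ∩ T).card := by
      rw [istdn_doubleCount G P T]
      rw [Finset.sum_congr rfl hTP, Finset.sum_const, smul_eq_mul, mul_comm]
    have step2 : ∑ v ∈ P, (G.neighborFinset v ∩ T).card ≤ ∑ v ∈ P, r := by
      apply Finset.sum_le_sum
      intro v _
      calc (G.neighborFinset v ∩ T).card ≤ (G.neighborFinset v).card :=
            Finset.card_le_card Finset.inter_subset_left
        _ = r := hcard v
    rw [step1]
    calc ∑ v ∈ P, (G.neighborFinset v ∩ T).card ≤ ∑ v ∈ P, r := step2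
      _ = r * P.card := by rw [Finset.sum_const, smul_eq_mul, mul_comm]
  have key : M.card ≤ r * P.card := le_trans e1 e2
  -- conclude in ℚ
  have hrpos : (0 : ℚ) < 1 + (r : ℚ) := by positivity
  rw [div_mul_eq_mul_div, div_le_iff₀ hrpos]
  have ha : ((P.card : ℚ)) + (M.card : ℚ) = (Fintype.card V : ℚ) := by
    exact_mod_cast hPMcard
  have hb : ((M.card : ℚ)) ≤ (r : ℚ) * (P.card : ℚ) := by exact_mod_cast key
  have hc : (g : ℚ) = (P.card : ℚ) - (M.card : ℚ) := by exact_mod_cast hgPM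
  nlinarith [hb, ha, hc]
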